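/- arXiv:2306.04924 — 2 statements merged into one kernel-verified Lean document; each statement's English description precedes it below -/
import Mathlib

section
/- Sufficiency of random codebooks with simple selecting decoders (Lemma 2): Let U ∈ ℝ^t be shared randomness with distribution P_U, let f : S^{d−1} × ℝ^t → [M] be a random encoder satisfying ε-LDP, and let g : [M] × ℝ^t → ℝ^d be a deterministic decoder such that the composition is unbiased, i.e. E_{P_U}[∑_{m=1}^M g(m, U) Q_f(m | v, U)] = v for all v ∈ S^{d−1}. Then there exist a random codebook Ũ^M = (Ũ_1,…,Ũ_M) ∈ (ℝ^d)^M and a random encoder f_0 : S^{d−1} × (ℝ^d)^M → [M] such that f_0 satisfies ε-LDP, the scheme (f_0, g^+, P_{Ũ^M}) with the simple selecting decoder g^+(m, Ũ^M) = Ũ_m is unbiased, and E_{P_U}[∑_{m=1}^M ‖g(m,U) − v‖² Q_f(m | v, U)] = E_{P_{Ũ^M}}[∑_{m=1}^M ‖Ũ_m − v‖² Q_{f_0}(m | v, Ũ^M)] for every v ∈ S^{d−1}. -/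
open MeasureTheory
open scoped BigOperators
open scoped ProbabilityTheory

noncomputable section

/-- Sufficiency of random codebooks with simple selecting decoders (Lemma 2): for any
shared randomness `U ∈ ℝ^t` with law `P`, any `ε`-LDP random encoder
`f : S^{d−1} × ℝ^t → [M]` (given by transition probabilities `Q`), and any deterministic
decoder `g : [M] × ℝ^t → ℝ^d` such that the composition is unbiased, there exist a random
codebook `Ũ^M ∈ (ℝ^d)^M` (a probability law `Pc` on `(ℝ^d)^M`) and a random encoder `Q₀`
satisfying `ε`-LDP such that the scheme with the simple selecting decoder
`g⁺(m, Ũ^M) = Ũ_m` is unbiased and has exactly the same per-input error. -/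
theorem codebook_with_selector_suffices (d t M : ℕ) (hd : 1 ≤ d) (ht : 1 ≤ t) (hM : 2 ≤ M)
    (ε : ℝ) (hε : 0 < ε)
    (P : Measure (Fin t → ℝ)) [IsProbabilityMeasure P]
    (Q : Fin M → EuclideanSpace ℝ (Fin d) → (Fin t → ℝ) → ℝ)
    (hQnonneg : ∀ m v u, 0 ≤ Q m v u)
    (hQsum : ∀ v u, ∑ m : Fin M, Q m v u = 1)
    (hQmeas : ∀ m v, Measurable fun u => Q m v u)
    (hLDP : ∀ᵐ u ∂P, ∀ (m : Fin M) (v v' : EuclideanSpace ℝ (Fin d)),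
      ‖v‖ = 1 → ‖v'‖ = 1 → Q m v u ≤ Real.exp ε * Q m v' u)
    (g : Fin M → (Fin t → ℝ) → EuclideanSpace ℝ (Fin d))
    (hgmeas : ∀ m, Measurable (g m))
    (hunbiased : ∀ v : EuclideanSpace ℝ (Fin d), ‖v‖ = 1 →
      ∫ u, ∑ m : Fin M, Q m v u • g m u ∂P = v) :
    ∃ (Pc : Measure (Fin M → EuclideanSpace ℝ (Fin d)))
      (_ : IsProbabilityMeasure Pc)
      (Q₀ : Fin M → EuclideanSpace ℝ (Fin d) → (Fin M → EuclideanSpace ℝ (Fin d)) → ℝ),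
      (∀ m v c, 0 ≤ Q₀ m v c) ∧
      (∀ v c, ∑ m : Fin M, Q₀ m v c = 1) ∧
      (∀ᵐ c ∂Pc, ∀ (m : Fin M) (v v' : EuclideanSpace ℝ (Fin d)),
        ‖v‖ = 1 → ‖v'‖ = 1 → Q₀ m v c ≤ Real.exp ε * Q₀ m v' c) ∧
      (∀ v : EuclideanSpace ℝ (Fin d), ‖v‖ = 1 →
        ∫ c, ∑ m : Fin M, Q₀ m v c • c m ∂Pc = v) ∧
      (∀ v : EuclideanSpace ℝ (Fin d), ‖v‖ = 1 →
        ∫ u, ∑ m : Fin M, Q m v u * ‖g m u - v‖ ^ 2 ∂P =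
          ∫ c, ∑ m : Fin M, Q₀ m v c * ‖c m - v‖ ^ 2 ∂Pc) := by
  classical
  have hQle1 : ∀ m v u, Q m v u ≤ 1 := by
    intro m v u
    calc Q m v u ≤ ∑ m' : Fin M, Q m' v u :=
          Finset.single_le_sum (fun i _ => hQnonneg i v u) (Finset.mem_univ m)
      _ = 1 := hQsum v u
  set G : (Fin t → ℝ) → (Fin M → EuclideanSpace ℝ (Fin d)) := fun u m => g m u with hGdef
  have hGmeas : Measurable G := measurable_pi_lambda _ fun m => hgmeas m
  have hembmeas : Measurable (fun u => (G u, u)) := hGmeas.prodMk measurable_id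
  set ρ : Measure ((Fin M → EuclideanSpace ℝ (Fin d)) × (Fin t → ℝ)) :=
    P.map (fun u => (G u, u)) with hρdef
  haveI : IsProbabilityMeasure ρ := Measure.isProbabilityMeasure_map hembmeas.aemeasurable
  set Pc : Measure (Fin M → EuclideanSpace ℝ (Fin d)) := ρ.fst with hPcdef
  haveI hPcprob : IsProbabilityMeasure Pc := by unfold Pc; infer_instance
  set κ := ρ.condKernel with hκdef
  have hdis : Pc ⊗ₘ κ = ρ := ρ.disintegrate ρ.condKernel
  -- integrability of Q under any finite measure
  have hQint : ∀ (μ' : Measure (Fin t → ℝ)) [IsFiniteMeasure μ'] (m : Fin M)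
      (v : EuclideanSpace ℝ (Fin d)), Integrable (fun u => Q m v u) μ' := by
    intro μ' _ m v
    refine Integrable.mono' (integrable_const 1) (hQmeas m v).aestronglyMeasurable ?_
    filter_upwards with u
    rw [Real.norm_eq_abs, abs_of_nonneg (hQnonneg m v u)]
    exact hQle1 m v u
  set Q₀ : Fin M → EuclideanSpace ℝ (Fin d) → (Fin M → EuclideanSpace ℝ (Fin d)) → ℝ :=
    fun m v c => ∫ u, Q m v u ∂(κ c) with hQ₀def
  have hQ₀nonneg : ∀ m v c, 0 ≤ Q₀ m v c := fun m v c =>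
    integral_nonneg fun u => hQnonneg m v u
  have hQ₀meas : ∀ m v, Measurable fun c => Q₀ m v c := by
    intro m v
    have : StronglyMeasurable (Function.uncurry fun (_ : Fin M → EuclideanSpace ℝ (Fin d))
        (u : Fin t → ℝ) => Q m v u) :=
      ((hQmeas m v).comp measurable_snd).stronglyMeasurable
    exact (this.integral_kernel_prod_right (κ := κ)).measurable
  have hQ₀sum : ∀ v c, ∑ m : Fin M, Q₀ m v c = 1 := by
    intro v c
    rw [hQ₀def]
    rw [← integral_finset_sum _ (fun m _ => hQint (κ c) m v)]
    simp only [hQsum v]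
    simp
  -- the a.e. LDP set
  obtain ⟨N, hNsub, hNmeas, hN0⟩ := exists_measurable_superset_of_null (ae_iff.mp hLDP)
  have hρN : ∀ᵐ x ∂(Pc ⊗ₘ κ), x.2 ∉ N := by
    rw [hdis, ae_iff]
    have hset : {x : (Fin M → EuclideanSpace ℝ (Fin d)) × (Fin t → ℝ) | ¬ x.2 ∉ N}
        = Prod.snd ⁻¹' N := by ext x; simp
    rw [hset, hρdef, Measure.map_apply hembmeas (measurable_snd hNmeas)]
    convert hN0 using 2
    rfl
  have hκN : ∀ᵐ c ∂Pc, ∀ᵐ u ∂(κ c), u ∉ N := Measure.ae_ae_of_ae_compProd hρN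
  have hLDP₀ : ∀ᵐ c ∂Pc, ∀ (m : Fin M) (v v' : EuclideanSpace ℝ (Fin d)),
      ‖v‖ = 1 → ‖v'‖ = 1 → Q₀ m v c ≤ Real.exp ε * Q₀ m v' c := by
    filter_upwards [hκN] with c hc
    intro m v v' hv hv'
    have hmono : Q₀ m v c ≤ ∫ u, Real.exp ε * Q m v' u ∂(κ c) := by
      refine integral_mono_ae (hQint (κ c) m v) ((hQint (κ c) m v').const_mul _) ?_
      filter_upwards [hc] with u hu
      by_contra hcon
      exact hcon (by_contra fun h => hu (hNsub (by
        simp only [Set.mem_setOf_eq]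
        push_neg
        exact ⟨m, v, v', hv, hv', lt_of_not_ge hcon⟩)))
    rwa [integral_const_mul] at hmono
  refine ⟨Pc, hPcprob, Q₀, hQ₀nonneg, hQ₀sum, hLDP₀, ?_, ?_⟩
  · -- unbiasedness
    intro v hv
    have h1 : Integrable (fun u => ∑ m : Fin M, Q m v u • g m u) P := by
      by_contra h
      have h0 : (0 : EuclideanSpace ℝ (Fin d)) = v := by
        rw [← hunbiased v hv, integral_undef h]
      rw [← h0] at hv
      simp at hv
    set F : (Fin M → EuclideanSpace ℝ (Fin d)) × (Fin t → ℝ) → EuclideanSpace ℝ (Fin d) :=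
      fun x => ∑ m : Fin M, Q m v x.2 • x.1 m with hFdef
    have hFmeas : Measurable F := by
      refine Finset.measurable_sum _ fun m _ => ?_
      exact ((hQmeas m v).comp measurable_snd).smul ((measurable_pi_apply m).comp measurable_fst)
    have hFint : Integrable F ρ := by
      rw [hρdef, integrable_map_measure hFmeas.aestronglyMeasurable hembmeas.aemeasurable]
      exact h1
    have hFintc : Integrable F (Pc ⊗ₘ κ) := by rw [hdis]; exact hFint
    have key : ∫ c, ∑ m : Fin M, Q₀ m v c • c m ∂Pc = ∫ x, F x ∂(Pc ⊗ₘ κ) := by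
      rw [Measure.integral_compProd hFintc]
      refine integral_congr_ae (Filter.Eventually.of_forall fun c => ?_)
      rw [hFdef]
      simp only
      rw [integral_finset_sum _ (fun m _ => (hQint (κ c) m v).smul_const (c m))]
      refine Finset.sum_congr rfl fun m _ => ?_
      rw [integral_smul_const]
    rw [key, hdis, hρdef, integral_map hembmeas.aemeasurable hFmeas.aestronglyMeasurable]
    exact hunbiased v hv
  · -- error equality
    intro v hv
    set Fe : (Fin M → EuclideanSpace ℝ (Fin d)) × (Fin t → ℝ) → ENNReal :=
      fun x => ∑ m : Fin M, ENNReal.ofReal (Q m v x.2) * ENNReal.ofReal (‖x.1 m - v‖ ^ 2)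
      with hFedef
    have hFemeas : Measurable Fe := by
      refine Finset.measurable_sum _ fun m _ => Measurable.fun_mul ?_ ?_
      · exact ENNReal.measurable_ofReal.comp ((hQmeas m v).comp measurable_snd)
      · exact ENNReal.measurable_ofReal.comp
          ((((measurable_pi_apply m).comp measurable_fst).sub measurable_const).norm.pow_const 2)
    have hLHS : ∫ u, ∑ m : Fin M, Q m v u * ‖g m u - v‖ ^ 2 ∂P
        = (∫⁻ u, Fe (G u, u) ∂P).toReal := by
      rw [integral_eq_lintegral_of_nonneg_ae
        (Filter.Eventually.of_forall fun u => Finset.sum_nonneg fun m _ =>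
          mul_nonneg (hQnonneg m v u) (by positivity))
        (Finset.aestronglyMeasurable_fun_sum _ fun m _ =>
          ((hQmeas m v).fun_mul
            (((hgmeas m).fun_sub measurable_const).norm.pow_const 2)).aestronglyMeasurable)]
      congr 1
      refine lintegral_congr fun u => ?_
      rw [ENNReal.ofReal_sum_of_nonneg fun m _ => mul_nonneg (hQnonneg m v u) (by positivity)]
      exact Finset.sum_congr rfl fun m _ => ENNReal.ofReal_mul (hQnonneg m v u)
    have hRHSmeas : AEStronglyMeasurable
        (fun c => ∑ m : Fin M, Q₀ m v c * ‖c m - v‖ ^ 2) Pc :=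
      (Finset.aestronglyMeasurable_fun_sum _ fun m _ =>
        ((hQ₀meas m v).fun_mul
          (((measurable_pi_apply m).fun_sub measurable_const).norm.pow_const 2)).aestronglyMeasurable)
    have hRHS : ∫ c, ∑ m : Fin M, Q₀ m v c * ‖c m - v‖ ^ 2 ∂Pc
        = (∫⁻ c, ∫⁻ u, Fe (c, u) ∂(κ c) ∂Pc).toReal := by
      rw [integral_eq_lintegral_of_nonneg_ae
        (Filter.Eventually.of_forall fun c => Finset.sum_nonneg fun m _ =>
          mul_nonneg (hQ₀nonneg m v c) (by positivity)) hRHSmeas]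
      congr 1
      refine lintegral_congr fun c => ?_
      rw [ENNReal.ofReal_sum_of_nonneg fun m _ => mul_nonneg (hQ₀nonneg m v c) (by positivity)]
      have hterm : ∀ m : Fin M, ENNReal.ofReal (Q₀ m v c * ‖c m - v‖ ^ 2)
          = ∫⁻ u, ENNReal.ofReal (Q m v u) * ENNReal.ofReal (‖c m - v‖ ^ 2) ∂(κ c) := by
        intro m
        rw [ENNReal.ofReal_mul (hQ₀nonneg m v c),
          ofReal_integral_eq_lintegral_ofReal (hQint (κ c) m v)
            (Filter.Eventually.of_forall fun u => hQnonneg m v u)]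
        exact (lintegral_mul_const _ (hQmeas m v).ennreal_ofReal).symm
      rw [Finset.sum_congr rfl fun m _ => hterm m,
        ← lintegral_finset_sum _ fun m _ => (hQmeas m v).ennreal_ofReal.fun_mul measurable_const]
    have hkey : ∫⁻ c, ∫⁻ u, Fe (c, u) ∂(κ c) ∂Pc = ∫⁻ u, Fe (G u, u) ∂P := by
      rw [← Measure.lintegral_compProd hFemeas, hdis, hρdef,
        lintegral_map hFemeas hembmeas]
    rw [hLHS, hRHS, hkey]
end
end

section
/- Global ratio bound for equivariant encoders on the rotating simplex codebook (key step of Theorem 1): Fix ε > 0, 2 ≤ M ≤ d and r > 0. Let Q(m | v, A) ∈ [0,1] (m ∈ [M], v ∈ S^{d−1}, A a d×d orthogonal matrix) be transition probabilities for the codebook (r A s_1, …, r A s_M) satisfying: (i) ε-LDP: Q(m | v, A) ≤ e^ε Q(m | v′, A) for all m, v, v′, A; (ii) rotation equivariance: Q(m | R v, R A) = Q(m | v, A) for every orthogonal R; (iii) relabeling covariance: viewing the encoder as a function of the labeled codeword tuple, for every permutation σ of [M] the probability assigned to a given codeword is unchanged when the codewords are relabeled by σ. Then Q(m_1 | v_1,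 A_1) ≤ e^ε Q(m_2 | v_2, A_2) for all m_1, m_2 ∈ [M], all v_1, v_2 ∈ S^{d−1}, and all orthogonal A_1, A_2; i.e., the supremum of Q over all (m, v, A) is at most e^ε times its infimum. -/
open Matrix
open scoped BigOperators

noncomputable section

/-- The simplex vectors `s_1, …, s_M ∈ ℝ^d`. -/
def simplexVec (d M : ℕ) (i : Fin M) : EuclideanSpace ℝ (Fin d) :=
  (EuclideanSpace.equiv (Fin d) ℝ).symm fun j =>
    if (j : ℕ) = (i : ℕ) then ((M : ℝ) - 1) / Real.sqrt ((M : ℝ) * ((M : ℝ) - 1))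
    else if (j : ℕ) < M then -(1 / Real.sqrt ((M : ℝ) * ((M : ℝ) - 1)))
    else 0

/-- A matrix acting on Euclidean space. -/
def act {d : ℕ} (A : Matrix (Fin d) (Fin d) ℝ) (v : EuclideanSpace ℝ (Fin d)) :
    EuclideanSpace ℝ (Fin d) :=
  (EuclideanSpace.equiv (Fin d) ℝ).symm (A.mulVec (EuclideanSpace.equiv (Fin d) ℝ v))

/-- The simplex codebook of radius `r` rotated by the matrix `A`: `(r A s_1, …, r A s_M)`. -/
def simplexCodebook (d M : ℕ) (r : ℝ) (A : Matrix (Fin d) (Fin d) ℝ) :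
    Fin M → EuclideanSpace ℝ (Fin d) :=
  fun m => r • act A (simplexVec d M m)

/-! ### Auxiliary lemmas -/

lemma act_apply' {d : ℕ} (A : Matrix (Fin d) (Fin d) ℝ) (v : EuclideanSpace ℝ (Fin d))
    (i : Fin d) : act A v i = A.mulVec (fun j => v j) i := rfl

lemma act_mul' {d : ℕ} (A B : Matrix (Fin d) (Fin d) ℝ) (v : EuclideanSpace ℝ (Fin d)) :
    act (A * B) v = act A (act B v) := by
  ext i
  simp [act, Matrix.mulVec_mulVec]
  rw [← Matrix.mulVec_mulVec]
  rfl

lemma act_smul' {d : ℕ} (A : Matrix (Fin d) (Fin d) ℝ) (c : ℝ) (v : EuclideanSpace ℝ (Fin d)) :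
    act A (c • v) = c • act A v := by
  ext i
  simp [act, Matrix.mulVec_smul]

lemma norm_act' {d : ℕ} (A : Matrix (Fin d) (Fin d) ℝ) (hA : A ∈ Matrix.orthogonalGroup (Fin d) ℝ)
    (v : EuclideanSpace ℝ (Fin d)) : ‖act A v‖ = ‖v‖ := by
  have h1 : Aᵀ * A = 1 := by
    have := hA.1
    rwa [Matrix.star_eq_conjTranspose, Matrix.conjTranspose_eq_transpose_of_trivial] at this
  have key : ∀ (x : Fin d → ℝ), ∑ i, ‖x i‖ ^ 2 = x ⬝ᵥ x := by
    intro x; simp [dotProduct, Real.norm_eq_abs, sq_abs, sq]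
  rw [EuclideanSpace.norm_eq, EuclideanSpace.norm_eq]
  congr 1
  calc ∑ i, ‖act A v i‖ ^ 2
      = (A.mulVec fun j => v j) ⬝ᵥ (A.mulVec fun j => v j) := key _
    _ = (fun j => v j) ⬝ᵥ (fun j => v j) := by
        rw [Matrix.dotProduct_mulVec, Matrix.vecMul_mulVec, h1, Matrix.vecMul_one]
    _ = ∑ i, ‖v i‖ ^ 2 := (key _).symm

lemma mulVec_permMatrix' {d : ℕ} (τ : Equiv.Perm (Fin d)) (x : Fin d → ℝ) :
    (τ.permMatrix ℝ).mulVec x = fun i => x (τ i) := by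
  funext i
  simp [Matrix.mulVec, dotProduct, PEquiv.toMatrix_apply, Equiv.toPEquiv_apply]

lemma permMatrix_mem_orth' {d : ℕ} (τ : Equiv.Perm (Fin d)) :
    τ.permMatrix ℝ ∈ Matrix.orthogonalGroup (Fin d) ℝ := by
  constructor
  · ext i j
    simp only [Matrix.mul_apply, Matrix.star_apply, Matrix.one_apply, star_trivial,
      PEquiv.toMatrix_apply, Equiv.toPEquiv_apply, Option.mem_def, Option.some.injEq]
    have key : ∀ x : Fin d, ((if τ x = i then (1:ℝ) else 0) * if τ x = j then 1 else 0)
        = if x = τ.symm i then (if i = j then 1 else 0) else 0 := by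
      intro x
      by_cases h : x = τ.symm i
      · subst h
        simp [eq_comm]
      · have h' : τ x ≠ i := fun hh => h (by rw [← hh]; simp)
        simp [h, h']
    rw [Finset.sum_congr rfl (fun x _ => key x), Finset.sum_ite_eq' Finset.univ (τ.symm i)]
    simp
  · ext i j
    simp only [Matrix.mul_apply, Matrix.star_apply, Matrix.one_apply, star_trivial,
      PEquiv.toMatrix_apply, Equiv.toPEquiv_apply, Option.mem_def, Option.some.injEq]
    have key : ∀ x : Fin d, ((if τ i = x then (1:ℝ) else 0) * if τ j = x then 1 else 0)
        = if x = τ i then (if i = j then 1 else 0) else 0 := by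
      intro x
      by_cases h : x = τ i
      · subst h
        simp [eq_comm, τ.injective.eq_iff]
      · have h' : τ i ≠ x := fun hh => h hh.symm
        simp [h, h']
    rw [Finset.sum_congr rfl (fun x _ => key x), Finset.sum_ite_eq' Finset.univ (τ i)]
    simp

lemma simplexVec_apply' (d M : ℕ) (i : Fin M) (k : Fin d) :
    simplexVec d M i k =
      if (k : ℕ) = (i : ℕ) then ((M : ℝ) - 1) / Real.sqrt ((M : ℝ) * ((M : ℝ) - 1))
      else if (k : ℕ) < M then -(1 / Real.sqrt ((M : ℝ) * ((M : ℝ) - 1)))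
      else 0 := rfl

lemma act_permMatrix_simplexVec (d M : ℕ) (hMd : M ≤ d) (σ : Equiv.Perm (Fin M)) (j : Fin M) :
    act ((σ.viaFintypeEmbedding (Fin.castLEEmb hMd)).permMatrix ℝ) (simplexVec d M j)
      = simplexVec d M (σ.symm j) := by
  set τ := σ.viaFintypeEmbedding (Fin.castLEEmb hMd) with hτ
  ext i
  have hmv : act (τ.permMatrix ℝ) (simplexVec d M j) i = simplexVec d M j (τ i) := by
    rw [act_apply', mulVec_permMatrix']
  rw [hmv]
  by_cases h : (i : ℕ) < M
  · have hi : i = Fin.castLEEmb hMd ⟨(i : ℕ), h⟩ := by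
      apply Fin.ext; simp
    have hτi : τ i = Fin.castLEEmb hMd (σ ⟨(i : ℕ), h⟩) := by
      conv_lhs => rw [hi]
      exact Equiv.Perm.viaFintypeEmbedding_apply_image σ (Fin.castLEEmb hMd) ⟨(i : ℕ), h⟩
    have hτiv : ((τ i : Fin d) : ℕ) = ((σ ⟨(i : ℕ), h⟩ : Fin M) : ℕ) := by
      rw [hτi]; simp
    rw [simplexVec_apply', simplexVec_apply', hτiv]
    by_cases hc : ((σ ⟨(i : ℕ), h⟩ : Fin M) : ℕ) = (j : ℕ)
    · have hc' : σ ⟨(i : ℕ), h⟩ = j := Fin.ext hc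
      have hc2 : (i : ℕ) = ((σ.symm j : Fin M) : ℕ) := by
        rw [← hc']; simp
      simp [hc, hc2]
    · have hc' : σ ⟨(i : ℕ), h⟩ ≠ j := fun hh => hc (by rw [hh])
      have hc2 : (i : ℕ) ≠ ((σ.symm j : Fin M) : ℕ) := by
        intro hh
        apply hc'
        have : (⟨(i : ℕ), h⟩ : Fin M) = σ.symm j := Fin.ext hh
        rw [this]; simp
      simp [hc, hc2, (σ ⟨(i : ℕ), h⟩).isLt, h]
  · have hnr : i ∉ Set.range (Fin.castLEEmb hMd) := by
      rintro ⟨a, ha⟩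
      apply h
      rw [← ha]
      exact a.isLt
    have hτi : τ i = i := Equiv.Perm.viaFintypeEmbedding_apply_notMem_range σ _ hnr
    have hj : ¬((i : ℕ) = (j : ℕ)) := by
      have := j.isLt; omega
    have hj' : ¬((i : ℕ) = ((σ.symm j : Fin M) : ℕ)) := by
      have := (σ.symm j).isLt; omega
    rw [hτi, simplexVec_apply', simplexVec_apply']
    simp [hj, hj', h]

lemma codebook_rot (d M : ℕ) (r : ℝ) (R A : Matrix (Fin d) (Fin d) ℝ) :
    (fun j => act R (simplexCodebook d M r A j)) = simplexCodebook d M r (R * A) := by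
  funext j
  simp only [simplexCodebook, act_smul', act_mul']

lemma codebook_perm (d M : ℕ) (hMd : M ≤ d) (r : ℝ) (A : Matrix (Fin d) (Fin d) ℝ)
    (σ : Equiv.Perm (Fin M)) :
    simplexCodebook d M r (A * (σ.viaFintypeEmbedding (Fin.castLEEmb hMd)).permMatrix ℝ)
      = fun j => simplexCodebook d M r A (σ.symm j) := by
  funext j
  simp only [simplexCodebook, act_mul', act_permMatrix_simplexVec d M hMd σ j]

/-- Global ratio bound for equivariant encoders on the rotating simplex codebook (key step of
Theorem 1): if the transition probabilities `Q(m | v, ·)` on codebooks `(r A s_1, …, r A s_M)`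
satisfy (i) `ε`-LDP, (ii) rotation equivariance and (iii) relabeling covariance, then
`Q(m₁ | v₁, A₁) ≤ e^ε · Q(m₂ | v₂, A₂)` for all messages, unit inputs and orthogonal
matrices; i.e. the supremum of `Q` is at most `e^ε` times its infimum. -/
theorem global_ratio_bound (d M : ℕ) (hM : 2 ≤ M) (hMd : M ≤ d) (ε : ℝ) (hε : 0 < ε)
    (r : ℝ) (hr : 0 < r)
    (Q : Fin M → EuclideanSpace ℝ (Fin d) → (Fin M → EuclideanSpace ℝ (Fin d)) → ℝ)
    (hQnonneg : ∀ m v c, 0 ≤ Q m v c)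
    (hQsum : ∀ (A : Matrix (Fin d) (Fin d) ℝ), A ∈ Matrix.orthogonalGroup (Fin d) ℝ →
      ∀ v : EuclideanSpace ℝ (Fin d),
      ∑ m : Fin M, Q m v (simplexCodebook d M r A) = 1)
    -- (i) ε-LDP on every codebook realization
    (hLDP : ∀ (A : Matrix (Fin d) (Fin d) ℝ), A ∈ Matrix.orthogonalGroup (Fin d) ℝ →
      ∀ (m : Fin M) (v v' : EuclideanSpace ℝ (Fin d)), ‖v‖ = 1 → ‖v'‖ = 1 →
      Q m v (simplexCodebook d M r A) ≤ Real.exp ε * Q m v' (simplexCodebook d M r A))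
    -- (ii) rotation equivariance
    (hequiv : ∀ (R : Matrix (Fin d) (Fin d) ℝ), R ∈ Matrix.orthogonalGroup (Fin d) ℝ →
      ∀ (A : Matrix (Fin d) (Fin d) ℝ), A ∈ Matrix.orthogonalGroup (Fin d) ℝ →
      ∀ (m : Fin M) (v : EuclideanSpace ℝ (Fin d)),
      Q m (act R v) (fun j => act R (simplexCodebook d M r A j)) =
        Q m v (simplexCodebook d M r A))
    -- (iii) relabeling covariance
    (hrelabel : ∀ (σ : Equiv.Perm (Fin M)) (A : Matrix (Fin d) (Fin d) ℝ),
      A ∈ Matrix.orthogonalGroup (Fin d) ℝ →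
      ∀ (m : Fin M) (v : EuclideanSpace ℝ (Fin d)),
      Q (σ m) v (fun j => simplexCodebook d M r A (σ.symm j)) =
        Q m v (simplexCodebook d M r A)) :
    ∀ (m₁ m₂ : Fin M) (v₁ v₂ : EuclideanSpace ℝ (Fin d)), ‖v₁‖ = 1 → ‖v₂‖ = 1 →
      ∀ (A₁ A₂ : Matrix (Fin d) (Fin d) ℝ), A₁ ∈ Matrix.orthogonalGroup (Fin d) ℝ →
      A₂ ∈ Matrix.orthogonalGroup (Fin d) ℝ →
      Q m₁ v₁ (simplexCodebook d M r A₁) ≤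
        Real.exp ε * Q m₂ v₂ (simplexCodebook d M r A₂) := by
  intro m₁ m₂ v₁ v₂ hv₁ hv₂ A₁ A₂ hA₁ hA₂
  -- Step 1: rotate `A₂` onto `A₁`
  set R : Matrix (Fin d) (Fin d) ℝ := A₁ * star A₂ with hRdef
  have hR : R ∈ Matrix.orthogonalGroup (Fin d) ℝ := mul_mem hA₁ (Unitary.star_mem hA₂)
  have hRA₂ : R * A₂ = A₁ := by
    rw [hRdef, mul_assoc, hA₂.1, mul_one]
  have e1 : Q m₂ (act R v₂) (simplexCodebook d M r A₁)
      = Q m₂ v₂ (simplexCodebook d M r A₂) := by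
    have h := hequiv R hR A₂ hA₂ m₂ v₂
    rwa [codebook_rot, hRA₂] at h
  -- Step 2: relabel `m₂` to `m₁`
  set σ : Equiv.Perm (Fin M) := Equiv.swap m₁ m₂ with hσdef
  set P : Matrix (Fin d) (Fin d) ℝ := (σ.viaFintypeEmbedding (Fin.castLEEmb hMd)).permMatrix ℝ
    with hPdef
  have hP : P ∈ Matrix.orthogonalGroup (Fin d) ℝ := permMatrix_mem_orth' _
  have hAP : A₁ * P ∈ Matrix.orthogonalGroup (Fin d) ℝ := mul_mem hA₁ hP
  have e2 : Q m₁ (act R v₂) (simplexCodebook d M r (A₁ * P))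
      = Q m₂ (act R v₂) (simplexCodebook d M r A₁) := by
    have h := hrelabel σ A₁ hA₁ m₂ (act R v₂)
    rw [hσdef] at h
    rw [Equiv.swap_apply_right] at h
    rw [hPdef, codebook_perm d M hMd r A₁ σ]
    exact h
  -- Step 3: rotate `A₁ * P` back onto `A₁`
  set R' : Matrix (Fin d) (Fin d) ℝ := A₁ * star (A₁ * P) with hR'def
  have hR' : R' ∈ Matrix.orthogonalGroup (Fin d) ℝ := mul_mem hA₁ (Unitary.star_mem hAP)
  have hR'AP : R' * (A₁ * P) = A₁ := by
    rw [hR'def, mul_assoc, hAP.1, mul_one]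
  have e3 : Q m₁ (act R' (act R v₂)) (simplexCodebook d M r A₁)
      = Q m₁ (act R v₂) (simplexCodebook d M r (A₁ * P)) := by
    have h := hequiv R' hR' (A₁ * P) hAP m₁ (act R v₂)
    rwa [codebook_rot, hR'AP] at h
  have hw : ‖act R' (act R v₂)‖ = 1 := by
    rw [norm_act' R' hR', norm_act' R hR, hv₂]
  calc Q m₁ v₁ (simplexCodebook d M r A₁)
      ≤ Real.exp ε * Q m₁ (act R' (act R v₂)) (simplexCodebook d M r A₁) :=
        hLDP A₁ hA₁ m₁ v₁ _ hv₁ hw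
    _ = Real.exp ε * Q m₂ v₂ (simplexCodebook d M r A₂) := by rw [e3, e2, e1]
end
end
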